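/- Let B be a finite field and F a field extension of B of degree t. Let ℓ, d, k be positive integers with ℓ ≤ k ≤ ℓ + d − 1, let β_1, …, β_ℓ, α_1, …, α_d be ℓ + d pairwise distinct elements of F, and let C = RS({β_1,…,β_ℓ,α_1,…,α_d}, k). Set L = ( (|F| − 1)(ℓ + d − k − 1) + d ) / |F|, suppose log_{|B|}(d/L) is not an integer, and define n_0 and b_min as: n_0 = ⌊ (L − d·|B|^{−⌈log_{|B|}(d/L)⌉}) / (|B|^{−⌊log_{|B|}(d/L)⌋} − |B|^{−⌈log_{|B|}(d/L)⌉}) ⌋ and b_min = n_0·⌊log_{|B|}(d/L)⌋ + (d − n_0)·⌈log_{|B|}(d/L)⌉. Then any B-linear repair scheme that recovers all of c_1, …, c_ℓ from the remaining d symbols has bandwidth at least b_min: if g_j : F → B^{b_j} (j ∈ [d]) are B-linear maps and h : B^{b_1} × ⋯ × B^{b_d} → F^ℓ is a B-linear map with h(g_1(c_{ℓ+1}), …, g_d(c_{ℓ+d})) = (c_1, …, c_ℓ) for every codeword c ∈ C, then ∑_{j=1}^d b_j ≥ b_min. -/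

import Mathlib

open Finset Polynomial Real


lemma key_ineq (q : ℝ) (hq : 1 < q) (m : ℤ) : q * (1 - q ^ (-m)) ≤ m * (q - 1) := by
  have hq0 : (0:ℝ) < q := lt_trans one_pos hq
  have hqne : q ≠ 0 := ne_of_gt hq0
  induction m using Int.induction_on with
  | zero => simp
  | succ i ih =>
      have ha : (0:ℝ) < q ^ (-(i:ℤ)) := zpow_pos hq0 _
      have ha1 : q ^ (-(i:ℤ)) ≤ 1 := zpow_le_one_of_nonpos₀ hq.le (by simp)
      have hstep : q ^ (-((i:ℤ)+1)) = q ^ (-(i:ℤ)) * q⁻¹ := by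
        rw [← zpow_neg_one q, ← zpow_add₀ hqne]; ring_nf
      have hexp : q * (1 - q ^ (-(i:ℤ)) * q⁻¹) = q - q ^ (-(i:ℤ)) := by
        field_simp
      rw [hstep, hexp]
      push_cast at ih ⊢
      nlinarith [ih, mul_nonneg (sub_nonneg.2 ha1) (sub_nonneg.2 hq.le)]
  | pred i ih =>
      have ha : (1:ℝ) ≤ q ^ ((i:ℤ)) := one_le_zpow₀ hq.le (by positivity)
      have hstep : q ^ (-(-(i:ℤ)-1)) = q ^ ((i:ℤ)) * q := by
        rw [(by ring : -(-(i:ℤ)-1) = (i:ℤ) + 1), zpow_add₀ hqne, zpow_one]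
      rw [hstep]
      rw [neg_neg] at ih
      push_cast at ih ⊢
      nlinarith [ih, mul_nonneg (sub_nonneg.2 hq.le) (by nlinarith : (0:ℝ) ≤ q ^ ((i:ℤ)) * q - 1)]

lemma per_point (q : ℝ) (hq : 1 < q) (fl : ℤ) (n : ℕ) :
    (fl:ℝ) + q/(q-1) ≤ (n:ℝ) + q^(fl+1)/(q-1) * q^(-(n:ℤ)) := by
  have hq0 : (0:ℝ) < q := by linarith
  have hqne : q ≠ 0 := ne_of_gt hq0
  have hq1 : (0:ℝ) < q - 1 := by linarith
  have hm := key_ineq q hq ((n:ℤ) - fl)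
  have h1 : q ^ (fl+1) / (q-1) * q ^ (-(n:ℤ)) = q / (q-1) * q ^ (-((n:ℤ)-fl)) := by
    rw [div_mul_eq_mul_div, div_mul_eq_mul_div]
    congr 1
    calc q^(fl+1) * q^(-(n:ℤ)) = q^((fl+1)+(-(n:ℤ))) := (zpow_add₀ hqne _ _).symm
      _ = q^((1:ℤ) + (-((n:ℤ)-fl))) := by congr 1; ring
      _ = q^(1:ℤ) * q^(-((n:ℤ)-fl)) := zpow_add₀ hqne _ _
      _ = q * q^(-((n:ℤ)-fl)) := by rw [zpow_one]
  have h2 : q/(q-1) * (1 - q^(-((n:ℤ)-fl))) ≤ ((n:ℝ)) - (fl:ℝ) := by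
    rw [div_mul_eq_mul_div, div_le_iff₀ hq1]
    calc q * (1 - q^(-((n:ℤ)-fl))) ≤ ((n:ℤ)-fl : ℤ) * (q-1) := hm
      _ = ((n:ℝ) - (fl:ℝ)) * (q-1) := by push_cast; ring
  rw [h1]
  rw [mul_sub, mul_one] at h2
  linarith

lemma bandwidth_opt (q : ℝ) (hq : 1 < q) (d : ℕ) (L : ℝ) (b : Fin d → ℕ)
    (fl n₀ : ℤ)
    (hn₀ : n₀ = ⌊(L - (d:ℝ) * q ^ (-(fl+1))) / (q ^ (-fl) - q ^ (-(fl+1)))⌋)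
    (hfeas : ∑ j, q ^ (-(b j : ℤ)) ≤ L) :
    n₀ * fl + ((d:ℤ) - n₀) * (fl + 1) ≤ ∑ j, (b j : ℤ) := by
  have hq0 : (0:ℝ) < q := by linarith
  have hqne : q ≠ 0 := ne_of_gt hq0
  have hq1 : (0:ℝ) < q - 1 := by linarith
  set C : ℝ := q^(fl+1)/(q-1) with hC
  have hCpos : 0 < C := by positivity
  have hu_pos : (0:ℝ) < q ^ (-(fl+1)) := zpow_pos hq0 _
  have hqfl : q ^ (-fl) = q ^ (-(fl+1)) * q := by
    rw [show -fl = -(fl+1)+1 by ring, zpow_add_one₀ hqne]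
  have hc1u : q ^ (fl+1) * q ^ (-(fl+1)) = 1 := by
    rw [← zpow_add₀ hqne, show fl+1 + -(fl+1) = 0 by ring, zpow_zero]
  -- sum inequality over reals
  have hsum : (d:ℝ) * ((fl:ℝ) + q/(q-1)) ≤ (∑ j, ((b j : ℕ):ℝ)) + C * ∑ j, q ^ (-(b j : ℤ)) := by
    calc (d:ℝ) * ((fl:ℝ) + q/(q-1)) = ∑ _j : Fin d, ((fl:ℝ) + q/(q-1)) := by
          rw [Finset.sum_const, Finset.card_univ, Fintype.card_fin, nsmul_eq_mul]
      _ ≤ ∑ j, (((b j : ℕ):ℝ) + C * q ^ (-(b j : ℤ))) :=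
          Finset.sum_le_sum (fun j _ => per_point q hq fl (b j))
      _ = (∑ j, ((b j : ℕ):ℝ)) + C * ∑ j, q ^ (-(b j : ℤ)) := by
          rw [Finset.sum_add_distrib, Finset.mul_sum]
  have hS : (d:ℝ) * ((fl:ℝ) + q/(q-1)) - C * L ≤ (∑ j, ((b j : ℕ):ℝ)) := by
    have := mul_le_mul_of_nonneg_left hfeas hCpos.le
    linarith
  -- floor arithmetic
  have hS2 : (d:ℝ)*(fl:ℝ) + (d:ℝ) + (d:ℝ)/(q-1) - C*L ≤ (∑ j, ((b j : ℕ):ℝ)) := by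
    have hdq : (d:ℝ)*(q/(q-1)) = (d:ℝ) + (d:ℝ)/(q-1) := by field_simp; ring
    nlinarith [hS]
  have hgoal2 : (d:ℤ)*fl + d - (∑ j, (b j : ℤ)) ≤ n₀ := by
    rw [hn₀]
    apply Int.le_floor.2
    have hD : (0:ℝ) < q ^ (-fl) - q ^ (-(fl+1)) := by
      rw [hqfl]; nlinarith
    rw [le_div_iff₀ hD]
    set D : ℝ := q ^ (-fl) - q ^ (-(fl+1)) with hDdef
    have hDe : D = q ^ (-(fl+1)) * (q-1) := by rw [hDdef, hqfl]; ring
    have hCD : C * D = 1 := by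
      rw [hDe, hC, div_mul_eq_mul_div,
        show q^(fl+1) * (q^(-(fl+1))*(q-1)) = (q^(fl+1)*q^(-(fl+1)))*(q-1) by ring,
        hc1u, one_mul, div_self (ne_of_gt hq1)]
    have hdiv : (d:ℝ)/(q-1) * D = (d:ℝ) * q ^ (-(fl+1)) := by
      rw [hDe]; field_simp
    have hstep1 : (((d:ℤ)*fl + d - (∑ j, (b j : ℤ)) : ℤ) : ℝ) ≤ C*L - (d:ℝ)/(q-1) := by
      push_cast
      push_cast at hS2
      linarith
    have hR : (C*L - (d:ℝ)/(q-1)) * D = L - (d:ℝ) * q ^ (-(fl+1)) := by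
      have h1 : (C*L - (d:ℝ)/(q-1)) * D = (C*D)*L - ((d:ℝ)/(q-1)*D) := by ring
      rw [h1, hCD, hdiv]; ring
    calc (((d:ℤ)*fl + d - (∑ j, (b j : ℤ)) : ℤ) : ℝ) * D
        ≤ (C*L - (d:ℝ)/(q-1)) * D := mul_le_mul_of_nonneg_right hstep1 hD.le
      _ = L - (d:ℝ) * q ^ (-(fl+1)) := hR
  have hrw : n₀ * fl + ((d:ℤ) - n₀) * (fl + 1) = (d:ℤ)*fl + d - n₀ + ((d:ℤ) - n₀ - d + n₀) * fl := by ring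
  linarith [hgoal2]


set_option maxHeartbeats 1000000 in
lemma feasibility {B F : Type*} [Field B] [Fintype B] [Field F] [Fintype F] [Algebra B F]
    (ℓ d k : ℕ) (hℓ : 0 < ℓ) (hℓk : ℓ ≤ k)
    (β : Fin ℓ → F) (α : Fin d → F)
    (hinj : Function.Injective (Sum.elim β α))
    (b : Fin d → ℕ)
    (g : (j : Fin d) → (F →ₗ[B] (Fin (b j) → B)))
    (h : ((j : Fin d) → (Fin (b j) → B)) →ₗ[B] (Fin ℓ → F))
    (hscheme : ∀ f : Polynomial F, f.degree < (k : WithBot ℕ) →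
      h (fun j => g j (f.eval (α j))) = fun i => f.eval (β i)) :
    ∑ j, (Fintype.card B : ℝ) ^ (-(b j : ℤ)) ≤
      (((Fintype.card F : ℝ) - 1) * ((ℓ : ℝ) + d - k - 1) + d) / (Fintype.card F : ℝ) := by
  classical
  haveI : Module.Finite B F := Module.Finite.of_finite
  set q : ℕ := Fintype.card B with hqdef
  set t : ℕ := Module.finrank B F with htdef
  have htpos : 0 < t := Module.finrank_pos
  have hq1 : 1 < q := Fintype.one_lt_card
  set bb : Module.Basis (Fin t) B F := Module.finBasis B F with hbb
  set τ : F →ₗ[B] B := bb.coord ⟨0, htpos⟩ with hτdef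
  have hτ : τ (bb ⟨0, htpos⟩) = 1 := by
    simp [hτdef, Module.Basis.coord_apply]
  have hτnd : ∀ y : F, (∀ μ : F, τ (μ * y) = 0) → y = 0 := by
    intro y hy
    by_contra hne
    have h1 := hy (bb ⟨0, htpos⟩ * y⁻¹)
    rw [mul_assoc, inv_mul_cancel₀ hne, mul_one, hτ] at h1
    exact one_ne_zero h1
  set ι : F →ₗ[B] Module.Dual B F := (LinearMap.mul B F).compr₂ τ with hιdef
  have hι_apply : ∀ γ x : F, ι γ x = τ (γ * x) := fun _ _ => rfl
  have hιinj : Function.Injective ι := by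
    intro γ₁ γ₂ hγ
    have h0 : ι (γ₁ - γ₂) = 0 := by rw [map_sub, hγ, sub_self]
    have h2 : γ₁ - γ₂ = 0 := by
      apply hτnd
      intro μ
      have h3 := LinearMap.congr_fun h0 μ
      rw [hι_apply] at h3
      rw [mul_comm]
      exact h3
    exact sub_eq_zero.1 h2
  have hιsurj : Function.Surjective ι := by
    refine (LinearMap.injective_iff_surjective_of_finrank_eq_finrank ?_).1 hιinj
    exact Subspace.dual_finrank_eq.symm
  set E : F ≃ₗ[B] Module.Dual B F := LinearEquiv.ofBijective ι ⟨hιinj, hιsurj⟩ with hE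
  set i₀ : Fin ℓ := ⟨0, hℓ⟩ with hi₀
  -- construction of the maps Λ j
  have hexists : ∀ j : Fin d, ∃ Λj : F →ₗ[B] F,
      (∀ γ x : F, τ (Λj γ * x) = τ (γ * h (Pi.single j (g j x)) i₀)) ∧
      Module.finrank B (LinearMap.range Λj) ≤ b j := by
    intro j
    set c' : (Fin (b j) → B) →ₗ[B] F :=
      (LinearMap.proj i₀).comp (h.comp (LinearMap.single B (fun j => Fin (b j) → B) j)) with hc'
    have hc'app : ∀ y, c' y = h (Pi.single j y) i₀ := fun y => rfl
    set A₁ : F →ₗ[B] ((Fin (b j) → B) →ₗ[B] B) := (LinearMap.lcomp B B c').comp ι with hA₁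
    set A₂ : ((Fin (b j) → B) →ₗ[B] B) →ₗ[B] F :=
      E.symm.toLinearMap.comp (LinearMap.lcomp B B (g j)) with hA₂
    refine ⟨A₂.comp A₁, ?_, ?_⟩
    · intro γ x
      have h1 : ι ((A₂.comp A₁) γ) = ((ι γ).comp c').comp (g j) := by
        have h2 : (A₂.comp A₁) γ = E.symm (((ι γ).comp c').comp (g j)) := rfl
        rw [h2]
        exact E.apply_symm_apply _
      have h3 := LinearMap.congr_fun h1 x
      rw [hι_apply] at h3
      rw [h3]
      rfl
    · have h1 : LinearMap.range (A₂.comp A₁) ≤ LinearMap.range A₂ :=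
        LinearMap.range_comp_le_range _ _
      calc Module.finrank B (LinearMap.range (A₂.comp A₁))
          ≤ Module.finrank B (LinearMap.range A₂) := Submodule.finrank_mono h1
        _ ≤ Module.finrank B ((Fin (b j) → B) →ₗ[B] B) := LinearMap.finrank_range_le A₂
        _ = Module.finrank B (Fin (b j) → B) :=
            Subspace.dual_finrank_eq (V := Fin (b j) → B)
        _ = b j := Module.finrank_fin_fun B
  choose Λ hΛτ hΛrank using hexists
  -- scheme evaluation identity
  have hsum_eval : ∀ f : Polynomial F, f.degree < (k : WithBot ℕ) →
      f.eval (β i₀) = ∑ j, h (Pi.single j (g j (f.eval (α j)))) i₀ := by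
    intro f hf
    have h1 := hscheme f hf
    calc f.eval (β i₀) = (fun i => f.eval (β i)) i₀ := rfl
      _ = h (fun j => g j (f.eval (α j))) i₀ := by rw [h1]
      _ = h (∑ j, Pi.single j (g j (f.eval (α j)))) i₀ := by
          rw [Finset.univ_sum_single (fun j => g j (f.eval (α j)))]
      _ = (∑ j, h (Pi.single j (g j (f.eval (α j))))) i₀ := by rw [map_sum]
      _ = ∑ j, h (Pi.single j (g j (f.eval (α j)))) i₀ := by rw [Finset.sum_apply]
  -- the F-linear relation
  have hrel : ∀ f : Polynomial F, f.degree < (k : WithBot ℕ) → ∀ γ : F,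
      γ * f.eval (β i₀) = ∑ j, Λ j γ * f.eval (α j) := by
    intro f hf γ
    have key : ∀ μ : F,
        τ (μ * (γ * f.eval (β i₀) - ∑ j, Λ j γ * f.eval (α j))) = 0 := by
      intro μ
      have hdeg : (C μ * f).degree < (k : WithBot ℕ) := by
        refine lt_of_le_of_lt ?_ hf
        calc (C μ * f).degree ≤ (C μ).degree + f.degree := degree_mul_le _ _
          _ ≤ 0 + f.degree := add_le_add_left degree_C_le _
          _ = f.degree := zero_add _
      have he := hsum_eval (C μ * f) hdeg
      simp only [eval_mul, eval_C] at he
      have e1 : μ * (γ * f.eval (β i₀) - ∑ j, Λ j γ * f.eval (α j)) =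
          γ * (μ * f.eval (β i₀)) - ∑ j, Λ j γ * (μ * f.eval (α j)) := by
        rw [mul_sub, Finset.mul_sum]
        congr 1
        · ring
        · exact Finset.sum_congr rfl fun j _ => by ring
      rw [e1, map_sub, map_sum]
      have e2 : τ (γ * (μ * f.eval (β i₀))) = ∑ j, τ (Λ j γ * (μ * f.eval (α j))) := by
        calc τ (γ * (μ * f.eval (β i₀)))
            = τ (γ * ∑ j, h (Pi.single j (g j (μ * f.eval (α j)))) i₀) := by rw [he]
          _ = τ (∑ j, γ * h (Pi.single j (g j (μ * f.eval (α j)))) i₀) := by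
              rw [Finset.mul_sum]
          _ = ∑ j, τ (γ * h (Pi.single j (g j (μ * f.eval (α j)))) i₀) := map_sum τ _ _
          _ = ∑ j, τ (Λ j γ * (μ * f.eval (α j))) :=
              Finset.sum_congr rfl fun j _ => (hΛτ j γ (μ * f.eval (α j))).symm
      rw [e2, sub_self]
    have := hτnd _ key
    exact sub_eq_zero.1 this
  -- minimum distance argument
  have hdist : ∀ γ : F, γ ≠ 0 → k ≤ (univ.filter fun j => ¬ Λ j γ = 0).card := by
    intro γ hγ
    by_contra hlt
    push_neg at hlt
    set S : Finset (Fin d) := univ.filter fun j => ¬ Λ j γ = 0 with hS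
    set f : Polynomial F := ∏ j ∈ S, (X - C (α j)) with hf
    have hdeg : f.degree < (k : WithBot ℕ) := by
      rw [hf, degree_prod]
      simp only [degree_X_sub_C]
      rw [Finset.sum_const, nsmul_eq_mul, mul_one]
      exact_mod_cast hlt
    have h1 := hrel f hdeg γ
    have h2 : ∑ j, Λ j γ * f.eval (α j) = 0 := by
      apply Finset.sum_eq_zero
      intro j _
      by_cases hj : j ∈ S
      · have : f.eval (α j) = 0 := by
          rw [hf, eval_prod]
          refine Finset.prod_eq_zero hj ?_
          simp
        rw [this, mul_zero]
      · have : Λ j γ = 0 := by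
          rw [hS] at hj
          simp only [Finset.mem_filter, Finset.mem_univ, true_and, not_not] at hj
          exact hj
        rw [this, zero_mul]
    have h3 : f.eval (β i₀) ≠ 0 := by
      rw [hf, eval_prod]
      refine Finset.prod_ne_zero_iff.2 fun j _ => ?_
      simp only [eval_sub, eval_X, eval_C]
      refine sub_ne_zero.2 fun he => ?_
      have : Sum.elim β α (Sum.inl i₀) = Sum.elim β α (Sum.inr j) := by simpa using he
      simpa using hinj this
    rw [h2] at h1
    exact (mul_ne_zero hγ h3) h1
  have hkd : k ≤ d := by
    refine le_trans (hdist 1 one_ne_zero) (le_trans (Finset.card_filter_le _ _) ?_)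
    simp
  -- double counting
  set N : ℕ := ∑ γ : F, (univ.filter fun j => Λ j γ = 0).card with hN
  have hswap : N = ∑ j, (univ.filter fun γ : F => Λ j γ = 0).card := by
    rw [hN]
    simp only [Finset.card_filter]
    exact Finset.sum_comm
  have hupper : N ≤ d + (Fintype.card F - 1) * (d - k) := by
    rw [hN]
    have h0 : (0:F) ∈ (univ : Finset F) := Finset.mem_univ 0
    rw [← Finset.sum_erase_add _ _ h0]
    have hterm0 : (univ.filter fun j => Λ j (0:F) = 0).card = d := by
      have he : (univ.filter fun j => Λ j (0:F) = 0) = univ :=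
        Finset.filter_true_of_mem fun j _ => map_zero (Λ j)
      rw [he, Finset.card_univ, Fintype.card_fin]
    have hrest : ∑ γ ∈ (univ : Finset F).erase 0, (univ.filter fun j => Λ j γ = 0).card
        ≤ (Fintype.card F - 1) * (d - k) := by
      calc ∑ γ ∈ (univ : Finset F).erase 0, (univ.filter fun j => Λ j γ = 0).card
          ≤ ((univ : Finset F).erase 0).card • (d - k) := by
            refine Finset.sum_le_card_nsmul _ _ _ fun γ hγ => ?_
            have hγ0 : γ ≠ 0 := Finset.ne_of_mem_erase hγ
            have hc := Finset.card_filter_add_card_filter_not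
              (s := (univ : Finset (Fin d))) (p := fun j => Λ j γ = 0)
            have hk' := hdist γ hγ0
            have hcard : (univ : Finset (Fin d)).card = d := by
              rw [Finset.card_univ, Fintype.card_fin]
            omega
        _ = (Fintype.card F - 1) * (d - k) := by
            rw [Finset.card_erase_of_mem h0, Finset.card_univ, smul_eq_mul]
    omega
  -- lower bound on each kernel
  have hq0R : (0:ℝ) < (q:ℝ) := by positivity
  have hq1R : (1:ℝ) ≤ (q:ℝ) := by exact_mod_cast hq1.le
  have hlow : ∀ j, (q:ℝ) ^ (t:ℤ) * (q:ℝ) ^ (-(b j:ℤ)) ≤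
      ((univ.filter fun γ : F => Λ j γ = 0).card : ℝ) := by
    intro j
    have hrn := LinearMap.finrank_range_add_finrank_ker (Λ j)
    rw [← htdef] at hrn
    have hker : t ≤ Module.finrank B (LinearMap.ker (Λ j)) + b j := by
      have := hΛrank j; omega
    have e : {γ : F // Λ j γ = 0} ≃ LinearMap.ker (Λ j) :=
      Equiv.subtypeEquivRight (fun γ => (LinearMap.mem_ker (f := Λ j)).symm)
    have hcards : (univ.filter fun γ : F => Λ j γ = 0).card
        = Fintype.card (LinearMap.ker (Λ j)) := by
      rw [← Fintype.card_subtype]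
      exact Fintype.card_congr e
    have hpow : Fintype.card (LinearMap.ker (Λ j))
        = q ^ (Module.finrank B (LinearMap.ker (Λ j))) := Module.card_eq_pow_finrank (K := B)
    rw [hcards, hpow]
    set r : ℕ := Module.finrank B (LinearMap.ker (Λ j))
    have h1 : (q:ℝ) ^ ((t:ℤ) + (-(b j:ℤ))) ≤ (q:ℝ) ^ ((r:ℤ)) := by
      refine zpow_le_zpow_right₀ hq1R ?_
      omega
    rw [← zpow_add₀ (ne_of_gt hq0R)]
    calc (q:ℝ) ^ ((t:ℤ) + (-(b j:ℤ))) ≤ (q:ℝ) ^ ((r:ℤ)) := h1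
      _ = ((q ^ r : ℕ) : ℝ) := by rw [zpow_natCast]; push_cast; ring
  have hchain : (q:ℝ)^(t:ℤ) * ∑ j, (q:ℝ)^(-(b j:ℤ)) ≤ (N:ℝ) := by
    rw [Finset.mul_sum]
    calc ∑ j, (q:ℝ)^(t:ℤ) * (q:ℝ)^(-(b j:ℤ))
        ≤ ∑ j, ((univ.filter fun γ : F => Λ j γ = 0).card : ℝ) :=
          Finset.sum_le_sum fun j _ => hlow j
      _ = (N:ℝ) := by rw [hswap]; push_cast; ring
  have hF1 : 1 ≤ Fintype.card F := Fintype.card_pos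
  have hupperR : (N:ℝ) ≤ ((Fintype.card F:ℝ) - 1) * ((ℓ:ℝ) + (d:ℝ) - (k:ℝ) - 1) + (d:ℝ) := by
    have h1 : (N:ℝ) ≤ (d:ℝ) + ((Fintype.card F:ℝ) - 1) * ((d:ℝ) - (k:ℝ)) := by
      calc (N:ℝ) ≤ ((d + (Fintype.card F - 1) * (d - k) : ℕ) : ℝ) := by exact_mod_cast hupper
        _ = (d:ℝ) + ((Fintype.card F:ℝ) - 1) * ((d:ℝ) - (k:ℝ)) := by
            push_cast [Nat.cast_sub hkd, Nat.cast_sub hF1]; ring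
    have hℓ1 : (1:ℝ) ≤ (ℓ:ℝ) := by exact_mod_cast hℓ
    have hF1R : (1:ℝ) ≤ (Fintype.card F:ℝ) := by exact_mod_cast hF1
    have h2 : ((Fintype.card F:ℝ) - 1) * ((d:ℝ) - (k:ℝ)) ≤
        ((Fintype.card F:ℝ) - 1) * ((ℓ:ℝ) + (d:ℝ) - (k:ℝ) - 1) :=
      mul_le_mul_of_nonneg_left (by linarith) (by linarith)
    linarith
  have hFpos : (0:ℝ) < (Fintype.card F : ℝ) := by
    have : 0 < Fintype.card F := Fintype.card_pos
    exact_mod_cast this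
  rw [le_div_iff₀ hFpos]
  have hcardF : ((Fintype.card F : ℕ):ℝ) = (q:ℝ)^(t:ℤ) := by
    have : Fintype.card F = q ^ t := Module.card_eq_pow_finrank (K := B) (V := F)
    rw [this, zpow_natCast]; push_cast; ring
  calc (∑ j, (q:ℝ) ^ (-(b j:ℤ))) * (Fintype.card F:ℝ)
      = (q:ℝ)^(t:ℤ) * ∑ j, (q:ℝ)^(-(b j:ℤ)) := by rw [hcardF]; ring
    _ ≤ (N:ℝ) := hchain
    _ ≤ ((Fintype.card F:ℝ) - 1) * ((ℓ:ℝ) + (d:ℝ) - (k:ℝ) - 1) + (d:ℝ) := hupperR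

/-- The lower bound on the repair bandwidth of `ℓ` erasures (Corollary 3): every
`B`-linear repair scheme recovering `c_1, …, c_ℓ` (i.e. `f(β_1), …, f(β_ℓ)`) of the
Reed–Solomon code on the distinct points `β_1,…,β_ℓ,α_1,…,α_d` from the remaining `d`
symbols has bandwidth `∑_j b_j ≥ b_min`, where, with
`L = ((|F|-1)(ℓ+d-k-1)+d)/|F|` (and `log_{|B|}(d/L)` not an integer),
`n₀ = ⌊(L - d|B|^{-⌈log_{|B|}(d/L)⌉}) / (|B|^{-⌊log_{|B|}(d/L)⌋} - |B|^{-⌈log_{|B|}(d/L)⌉})⌋`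
and `b_min = n₀⌊log_{|B|}(d/L)⌋ + (d - n₀)⌈log_{|B|}(d/L)⌉`. -/
theorem repair_bandwidth_lower_bound {B F : Type*} [Field B] [Fintype B]
    [Field F] [Fintype F] [Algebra B F]
    (t : ℕ) (ht : Module.finrank B F = t)
    (ℓ d k : ℕ) (hℓ : 0 < ℓ) (hd : 0 < d) (hk : 0 < k)
    (hℓk : ℓ ≤ k) (hkℓd : k ≤ ℓ + d - 1)
    (β : Fin ℓ → F) (α : Fin d → F)
    (hinj : Function.Injective (Sum.elim β α))
    (L : ℝ)
    (hL : L = (((Fintype.card F : ℝ) - 1) * ((ℓ : ℝ) + d - k - 1) + d) /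
      (Fintype.card F : ℝ))
    (hnotint : ¬ ∃ z : ℤ, Real.logb (Fintype.card B) ((d : ℝ) / L) = z)
    (fl cl n₀ : ℤ)
    (hfl : fl = ⌊Real.logb (Fintype.card B) ((d : ℝ) / L)⌋)
    (hcl : cl = ⌈Real.logb (Fintype.card B) ((d : ℝ) / L)⌉)
    (hn₀ : n₀ = ⌊(L - (d : ℝ) * (Fintype.card B : ℝ) ^ (-cl)) /
      ((Fintype.card B : ℝ) ^ (-fl) - (Fintype.card B : ℝ) ^ (-cl))⌋)
    (b : Fin d → ℕ)
    (g : (j : Fin d) → (F →ₗ[B] (Fin (b j) → B)))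
    (h : ((j : Fin d) → (Fin (b j) → B)) →ₗ[B] (Fin ℓ → F))
    (hscheme : ∀ f : Polynomial F, f.degree < (k : WithBot ℕ) →
      h (fun j => g j (f.eval (α j))) = fun i => f.eval (β i)) :
    n₀ * fl + ((d : ℤ) - n₀) * cl ≤ ∑ j, (b j : ℤ) := by
  have hq1 : 1 < Fintype.card B := Fintype.one_lt_card
  have hq1R : (1:ℝ) < ((Fintype.card B : ℕ) : ℝ) := by exact_mod_cast hq1
  have hfeas : ∑ j, ((Fintype.card B : ℕ) : ℝ) ^ (-(b j : ℤ)) ≤ L := by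
    rw [hL]; exact feasibility ℓ d k hℓ hℓk β α hinj b g h hscheme
  have hclfl : cl = fl + 1 := by
    set x := Real.logb (Fintype.card B) ((d : ℝ) / L) with hx
    have hxne : x ≠ ((⌊x⌋ : ℤ) : ℝ) := fun hcon => hnotint ⟨⌊x⌋, hcon⟩
    have hlt : (⌊x⌋ : ℝ) < x := lt_of_le_of_ne (Int.floor_le x) (Ne.symm hxne)
    have h1 : ⌈x⌉ ≤ ⌊x⌋ + 1 := Int.ceil_le.2 (by
      push_cast
      exact (Int.lt_floor_add_one x).le)
    have h2 : ⌊x⌋ < ⌈x⌉ := Int.lt_ceil.2 hlt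
    omega
  rw [hclfl]
  exact bandwidth_opt ((Fintype.card B : ℕ) : ℝ) hq1R d L b fl n₀
    (by rw [hn₀, hclfl]) hfeas
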